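/- arXiv:2104.05922 — 10 statements merged into one kernel-verified Lean document; each statement's English description precedes it below -/
import Mathlib

section
/- Let L be the infinite-dimensional cyclic Leibniz algebra over a field F (basis {a_n | n ≥ 1}, [a_1,a_n] = a_{n+1}, [a_m,a_k] = 0 for m > 1). If f is an endomorphism of L with f(a_1) = Σ_n γ_n a_n (finitely many γ_n nonzero), then for every s ≥ 1, f(a_s) = Σ_k γ_1^{s-1} γ_k a_{k+s-1}. -/
lemma pnat_aux1 (k : ℕ+) : k + 1 - 1 = k := by
  apply PNat.coe_injective
  rw [PNat.sub_coe]
  split_ifs with h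
  · simp
  · exact absurd (PNat.lt_add_left 1 k) h

lemma pnat_aux2 (k s : ℕ+) : (k + s - 1) + 1 = k + (s + 1) - 1 := by
  apply PNat.coe_injective
  have h1 : (1:ℕ+) < k + s := by
    calc (1:ℕ+) ≤ k := k.one_le
    _ < k + s := PNat.lt_add_right k s
  have h2 : (1:ℕ+) < k + (s + 1) := lt_trans h1 (by
    have : k + s < k + s + 1 := PNat.lt_add_right _ 1
    simpa [add_assoc] using this)
  simp only [PNat.add_coe, PNat.one_coe, PNat.sub_coe, h1, h2, if_true]
  have := k.pos
  omega

/-- For the infinite dimensional cyclic Leibniz algebra with basis `{a_n | n ≥ 1}`: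
if `f` is an endomorphism with `f(a₁) = Σ_n γ_n a_n`, then
`f(a_s) = Σ_k γ₁^{s-1} γ_k a_{k+s-1}` for all `s ≥ 1`. -/
theorem stmt9
    (F : Type*) [Field F] (L : Type*) [AddCommGroup L] [Module F L]
    (br : L →ₗ[F] L →ₗ[F] L) (B : Module.Basis ℕ+ F L)
    (hleib : ∀ a b c : L, br a (br b c) = br (br a b) c + br b (br a c))
    (hbr1 : ∀ n : ℕ+, br (B 1) (B n) = B (n + 1))
    (hbr2 : ∀ m k : ℕ+, 1 < m → br (B m) (B k) = 0)
    (f : L →ₗ[F] L) (hf : ∀ x y : L, f (br x y) = br (f x) (f y)) :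
    ∀ s : ℕ+, f (B s) = (B.repr (f (B 1))).sum fun k c =>
      ((B.repr (f (B 1)) 1) ^ ((s : ℕ) - 1) * c) • B (k + s - 1) := by
  set γ : ℕ+ →₀ F := B.repr (f (B 1)) with hγ
  have hfB1 : f (B 1) = γ.sum fun k c => c • B k := (B.linearCombination_repr (f (B 1))).symm
  -- key: br (f (B 1)) (B n) = γ 1 • B (n+1)
  have key : ∀ n : ℕ+, br (f (B 1)) (B n) = γ 1 • B (n + 1) := by
    intro n
    have hflip : br (f (B 1)) (B n) = br.flip (B n) (f (B 1)) := rfl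
    rw [hflip, hfB1, map_finsuppSum]
    simp only [map_smul, LinearMap.flip_apply]
    have : (γ.sum fun k c => c • br (B k) (B n)) =
        γ.sum fun k c => if k = 1 then c • B (n + 1) else 0 := by
      apply Finsupp.sum_congr
      intro k _
      by_cases hk : k = 1
      · subst hk; simp [hbr1 n]
      · have : 1 < k := lt_of_le_of_ne k.one_le (Ne.symm hk)
        simp [hk, hbr2 k n this]
    rw [this]
    rw [Finsupp.sum_ite_eq' γ 1 (fun _ c => c • B (n + 1))]
    by_cases h1 : 1 ∈ γ.support
    · simp [h1]
    · simp only [h1, if_neg]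
      rw [Finsupp.notMem_support_iff.mp h1]
      simp [h1]
  intro s
  induction s using PNat.caseStrongInductionOn with
  | hz =>
    simp only [PNat.one_coe, Nat.sub_self, pow_zero, one_mul, pnat_aux1]
    exact hfB1
  | hi s ih =>
    have hb : B (s + 1) = br (B 1) (B s) := (hbr1 s).symm
    rw [hb, hf, ih s le_rfl, map_finsuppSum]
    apply Finsupp.sum_congr
    intro k _
    rw [map_smul, key, smul_smul, pnat_aux2 k s]
    congr 1
    have hs : ((s:ℕ) - 1) + 1 = (s : ℕ) := Nat.succ_pred_eq_of_pos s.pos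
    push_cast
    rw [mul_right_comm, ← pow_succ, hs]
end

section
/- Let L be the infinite-dimensional cyclic Leibniz algebra over a field F (basis {a_n | n ≥ 1}, [a_1,a_n] = a_{n+1}, [a_m,a_k] = 0 for m > 1). Conversely to the determination of endomorphisms: for any finitely supported sequence (γ_n)_{n≥1} in F, the linear map f defined by f(a_s) = Σ_k γ_1^{s-1} γ_k a_{k+s-1} for all s ≥ 1 is an endomorphism of L. -/
private lemma pn1 (a : ℕ+) : (1:ℕ+) < a + 1 := by
  have := a.one_le
  calc (1:ℕ+) ≤ a := this
  _ < a + 1 := PNat.lt_add_right a 1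

private lemma pn2 (a : ℕ+) : a + 1 - 1 = a := by
  apply PNat.coe_injective
  rw [PNat.sub_coe]
  simp [pn1]

private lemma pnab (a b : ℕ+) : (1:ℕ+) < a + b := by
  rw [← PNat.coe_lt_coe]
  simp only [PNat.add_coe, PNat.one_coe]
  have := a.pos; have := b.pos
  omega

private lemma pn3 (a b : ℕ+) : a + b - 1 + 1 = a + b := by
  apply PNat.coe_injective
  simp only [PNat.add_coe, PNat.sub_coe, if_pos (pnab a b), PNat.one_coe]
  have := a.pos; have := b.pos
  omega

private lemma pn4 (a b : ℕ+) (h : 1 < b) : 1 < a + b - 1 := by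
  rw [← PNat.coe_lt_coe]
  simp only [PNat.sub_coe, if_pos (pnab a b), PNat.add_coe, PNat.one_coe]
  have := a.pos
  have hb : (1:ℕ) < b := h
  omega

/-- For the infinite dimensional cyclic Leibniz algebra with basis `{a_n | n ≥ 1}`:
for any finitely supported sequence `(γ_n)` in `F`, the linear map defined by
`f(a_s) = Σ_k γ₁^{s-1} γ_k a_{k+s-1}` is an endomorphism. -/
theorem stmt10
    (F : Type*) [Field F] (L : Type*) [AddCommGroup L] [Module F L]
    (br : L →ₗ[F] L →ₗ[F] L) (B : Module.Basis ℕ+ F L)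
    (hleib : ∀ a b c : L, br a (br b c) = br (br a b) c + br b (br a c))
    (hbr1 : ∀ n : ℕ+, br (B 1) (B n) = B (n + 1))
    (hbr2 : ∀ m k : ℕ+, 1 < m → br (B m) (B k) = 0)
    (γ : ℕ+ →₀ F) (f : L →ₗ[F] L)
    (hfdef : ∀ s : ℕ+, f (B s) = γ.sum fun k c =>
      ((γ 1) ^ ((s : ℕ) - 1) * c) • B (k + s - 1)) :
    ∀ x y : L, f (br x y) = br (f x) (f y) := by
  have hzero : ∀ (m : ℕ+) (y : L), 1 < m → br (B m) (f y) = 0 := by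
    intro m y hm
    have hy := B.linearCombination_repr y
    rw [← hy, Finsupp.linearCombination_apply, Finsupp.sum, map_sum, map_sum]
    refine Finset.sum_eq_zero fun l _ => ?_
    rw [map_smul, map_smul, hfdef l, Finsupp.sum, map_sum]
    refine smul_eq_zero_of_right _ (Finset.sum_eq_zero fun j _ => ?_)
    rw [map_smul, hbr2 m (j + l - 1) hm, smul_zero]
  have key : ∀ m k : ℕ+, f (br (B m) (B k)) = br (f (B m)) (f (B k)) := by
    intro m k
    rcases lt_or_eq_of_le m.one_le with hm | hm
    · -- 1 < m
      rw [hbr2 m k hm, map_zero]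
      rw [hfdef m, Finsupp.sum, map_sum, LinearMap.coe_sum, Finset.sum_apply]
      symm
      refine Finset.sum_eq_zero fun j _ => ?_
      rw [map_smul, LinearMap.smul_apply, hzero _ _ (pn4 j m hm), smul_zero]
    · -- m = 1
      subst hm
      rw [hbr1 k, hfdef (k + 1)]
      have hY : br (B 1) (f (B k)) = γ.sum fun l c => ((γ 1) ^ ((k:ℕ) - 1) * c) • B (l + k) := by
        rw [hfdef k, Finsupp.sum, Finsupp.sum, map_sum]
        refine Finset.sum_congr rfl fun l _ => ?_
        rw [map_smul, hbr1, pn3]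
      rw [hfdef 1]
      simp only [PNat.one_coe, Nat.sub_self, pow_zero, one_mul, pn2]
      conv_rhs => rw [Finsupp.sum]
      rw [map_sum, LinearMap.coe_sum, Finset.sum_apply]
      rw [Finset.sum_eq_single 1 (fun j _ hjne => by
          rw [map_smul, LinearMap.smul_apply,
            hzero j _ (lt_of_le_of_ne j.one_le (Ne.symm hjne)), smul_zero])
        (fun h1 => by
          rw [Finsupp.notMem_support_iff.mp h1, zero_smul, map_zero, LinearMap.zero_apply])]
      rw [map_smul, LinearMap.smul_apply, hY, Finsupp.smul_sum]
      refine Finsupp.sum_congr fun l _ => ?_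
      rw [smul_smul, ← mul_assoc]
      congr 2
      · rw [← pow_succ']
        congr 1
        have hk := k.pos
        simp only [PNat.add_coe, PNat.one_coe]
        omega
      · rw [← add_assoc, pn2]
  have hmain : br.compr₂ f = (br.comp f).compl₂ f := by
    refine B.ext fun m => ?_
    refine B.ext fun k => ?_
    simpa using key m k
  intro x y
  have := LinearMap.congr_fun (LinearMap.congr_fun hmain x) y
  simpa using this
end

section
/- Let L be the infinite-dimensional cyclic Leibniz algebra over a field F (basis {a_n | n ≥ 1}, [a_1,a_n] = a_{n+1}, [a_m,a_k] = 0 for m > 1). If f is an endomorphism of L with f(a_1) ∈ [L,L] (i.e. the coefficient of a_1 in f(a_1) is zero), then f(a_j) = 0 for all j > 1, and f ∘ f = 0. -/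
/-- For the infinite dimensional cyclic Leibniz algebra with basis `{a_n | n ≥ 1}`:
if `f` is an endomorphism with `f(a₁) ∈ [L,L] = span {a_n | n ≥ 2}`, then
`f(a_j) = 0` for all `j > 1` and `f ∘ f = 0`. -/
theorem stmt11
    (F : Type*) [Field F] (L : Type*) [AddCommGroup L] [Module F L]
    (br : L →ₗ[F] L →ₗ[F] L) (B : Module.Basis ℕ+ F L)
    (hleib : ∀ a b c : L, br a (br b c) = br (br a b) c + br b (br a c))
    (hbr1 : ∀ n : ℕ+, br (B 1) (B n) = B (n + 1))
    (hbr2 : ∀ m k : ℕ+, 1 < m → br (B m) (B k) = 0)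
    (f : L →ₗ[F] L) (hf : ∀ x y : L, f (br x y) = br (f x) (f y))
    (h1 : f (B 1) ∈ Submodule.span F {x : L | ∃ n : ℕ+, 1 < n ∧ x = B n}) :
    (∀ j : ℕ+, 1 < j → f (B j) = 0) ∧ f ∘ₗ f = 0 := by
  -- every element of the span kills everything on the left
  have hz : ∀ x ∈ Submodule.span F {x : L | ∃ n : ℕ+, 1 < n ∧ x = B n},
      br x = 0 := by
    intro x hx
    induction hx using Submodule.span_induction with
    | mem x hx =>
      obtain ⟨n, hn, rfl⟩ := hx
      exact B.ext fun k => by simp [hbr2 n k hn]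
    | zero => exact map_zero br
    | add x y _ _ hx hy => rw [map_add, hx, hy, add_zero]
    | smul c x _ hx => rw [map_smul, hx, smul_zero]
  have hbf1 : br (f (B 1)) = 0 := hz _ h1
  have hj : ∀ j : ℕ+, 1 < j → f (B j) = 0 := by
    intro j hjgt
    have hkpos : 0 < j.natPred := by
      have : (1 : ℕ) < (j : ℕ) := hjgt
      simp [PNat.natPred]; omega
    set k : ℕ+ := ⟨j.natPred, hkpos⟩ with hk
    have hjk : j = k + 1 := by
      apply PNat.coe_injective
      have h2 : 1 ≤ (j:ℕ) := j.one_le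
      simp [hk, PNat.natPred]
      apply PNat.eq
      show (j : ℕ) = ((j : ℕ) - 1) + 1
      omega
    rw [hjk, ← hbr1 k, hf, hbf1]
    simp
  refine ⟨hj, ?_⟩
  have hspan0 : ∀ x ∈ Submodule.span F {x : L | ∃ n : ℕ+, 1 < n ∧ x = B n},
      f x = 0 := by
    intro x hx
    have : Submodule.span F {x : L | ∃ n : ℕ+, 1 < n ∧ x = B n} ≤ LinearMap.ker f := by
      rw [Submodule.span_le]
      rintro y ⟨n, hn, rfl⟩
      exact hj n hn
    exact this hx
  apply B.ext
  intro n
  rcases eq_or_lt_of_le n.one_le with h | h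
  · simp only [LinearMap.comp_apply, ← h]
    exact hspan0 _ h1
  · simp [LinearMap.comp_apply, hj n h]
end

section
/- Let L be the infinite-dimensional cyclic Leibniz algebra over a field F (basis {a_n | n ≥ 1}, [a_1,a_n] = a_{n+1}, [a_m,a_k] = 0 for m > 1). An endomorphism f of L satisfies f ∘ f = 0 if and only if f(x) ∈ [L,L] for every x ∈ L. -/
/-- For the infinite dimensional cyclic Leibniz algebra with basis `{a_n | n ≥ 1}`:
an endomorphism `f` satisfies `f ∘ f = 0` if and only if `f(x) ∈ [L,L]`
(`= span {a_n | n ≥ 2}`) for every `x`. -/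
theorem stmt12
    (F : Type*) [Field F] (L : Type*) [AddCommGroup L] [Module F L]
    (br : L →ₗ[F] L →ₗ[F] L) (B : Module.Basis ℕ+ F L)
    (hleib : ∀ a b c : L, br a (br b c) = br (br a b) c + br b (br a c))
    (hbr1 : ∀ n : ℕ+, br (B 1) (B n) = B (n + 1))
    (hbr2 : ∀ m k : ℕ+, 1 < m → br (B m) (B k) = 0)
    (f : L →ₗ[F] L) (hf : ∀ x y : L, f (br x y) = br (f x) (f y)) :
    f ∘ₗ f = 0 ↔
      ∀ x : L, f x ∈ Submodule.span F {z : L | ∃ n : ℕ+, 1 < n ∧ z = B n} := by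
  set M := Submodule.span F {z : L | ∃ n : ℕ+, 1 < n ∧ z = B n} with hMdef
  -- every bracket is determined by the coefficient of `B 1` in the first slot
  have hbr_eq : ∀ y z : L, br y z = (B.repr y) 1 • br (B 1) z := by
    have h : br = (B.coord 1).smulRight (br (B 1)) := by
      apply B.ext
      intro i
      rcases eq_or_ne i 1 with h1 | h1
      · subst h1; simp
      · have hz : br (B i) = 0 := by
          apply B.ext
          intro k
          rw [hbr2 i k (lt_of_le_of_ne i.one_le (Ne.symm h1))]
          rfl
        rw [hz]
        simp [Finsupp.single_apply, h1]
    intro y z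
    rw [h]
    simp [Module.Basis.coord_apply]
  -- elements of M have zero first coordinate
  have hM0 : ∀ y ∈ M, B.repr y 1 = 0 := by
    intro y hy
    induction hy using Submodule.span_induction with
    | mem z hz =>
      obtain ⟨n, hn, rfl⟩ := hz
      simp [Module.Basis.repr_self, Finsupp.single_apply, hn.ne']
    | zero => simp
    | add a b _ _ ha hb => simp [ha, hb]
    | smul c a _ ha => simp [ha]
  -- elements with zero first coordinate are in M
  have hMrepr : ∀ y : L, B.repr y 1 = 0 → y ∈ M := by
    intro y hy
    have hyt := B.linearCombination_repr y
    rw [← hyt, Finsupp.linearCombination_apply, Finsupp.sum]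
    apply Submodule.sum_mem
    intro n hn
    rcases eq_or_ne n 1 with h1 | h1
    · subst h1; rw [hy, zero_smul]; exact M.zero_mem
    · exact M.smul_mem _ (Submodule.subset_span
        ⟨n, lt_of_le_of_ne n.one_le (Ne.symm h1), rfl⟩)
  -- br (B 1) w is always in M
  have hspan : ∀ w : L, w ∈ Submodule.span F (Set.range B) := by
    intro w; rw [B.span_eq]; exact Submodule.mem_top
  have hM1 : ∀ w : L, br (B 1) w ∈ M := by
    intro w
    induction hspan w using Submodule.span_induction with
    | mem z hz =>
      obtain ⟨k, rfl⟩ := hz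
      rw [hbr1]
      exact Submodule.subset_span ⟨k + 1, PNat.lt_add_left 1 k, rfl⟩
    | zero => rw [map_zero]; exact M.zero_mem
    | add a b _ _ ha hb => rw [map_add]; exact M.add_mem ha hb
    | smul c a _ ha => rw [map_smul]; exact M.smul_mem c ha
  -- f maps B (m+1) into M (unconditionally)
  have fM : ∀ m : ℕ+, f (B (m + 1)) ∈ M := by
    intro m
    rw [← hbr1, hf, hbr_eq]
    exact M.smul_mem _ (hM1 _)
  have fM' : ∀ n : ℕ+, 1 < n → f (B n) ∈ M := by
    intro n hn
    obtain ⟨m, rfl⟩ := PNat.exists_eq_succ_of_ne_one hn.ne'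
    exact fM m
  -- f maps M into M
  have hfM : ∀ y ∈ M, f y ∈ M := by
    intro y hy
    induction hy using Submodule.span_induction with
    | mem z hz => obtain ⟨n, hn, rfl⟩ := hz; exact fM' n hn
    | zero => rw [map_zero]; exact M.zero_mem
    | add a b _ _ ha hb => rw [map_add]; exact M.add_mem ha hb
    | smul c a _ ha => rw [map_smul]; exact M.smul_mem c ha
  constructor
  · intro hff
    -- first show f (B 1) ∈ M, i.e. d = 0
    set d := B.repr (f (B 1)) 1 with hd
    set m := f (B 1) - d • B 1 with hm
    have hmM : m ∈ M := by
      apply hMrepr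
      simp [hm, hd]
    have hy : f (B 1) = d • B 1 + m := by rw [hm]; abel
    have hffB1 : f (f (B 1)) = 0 := by
      have := LinearMap.ext_iff.mp hff (B 1)
      simpa using this
    have hzero : (0 : F) = d * d := by
      have h1 : f (f (B 1)) = d • f (B 1) + f m := by
        conv_lhs => rw [hy]
        rw [map_add, map_smul]
      have h2 : B.repr (f (f (B 1))) 1 = d * d := by
        rw [h1, map_add, map_smul]
        simp only [Finsupp.add_apply, Finsupp.smul_apply]
        rw [hM0 _ (hfM m hmM), ← hd]
        simp [mul_comm]
      rw [hffB1] at h2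
      simpa using h2.symm
    have hd0 : d = 0 := by
      have := mul_self_eq_zero.mp hzero.symm
      exact this
    have hfB1 : f (B 1) ∈ M := hMrepr _ hd0
    -- conclude for all x
    intro x
    induction hspan x using Submodule.span_induction with
    | mem z hz =>
      obtain ⟨n, rfl⟩ := hz
      rcases eq_or_ne n 1 with h1 | h1
      · subst h1; exact hfB1
      · exact fM' n (lt_of_le_of_ne n.one_le (Ne.symm h1))
    | zero => rw [map_zero]; exact M.zero_mem
    | add a b _ _ ha hb => rw [map_add]; exact M.add_mem ha hb
    | smul c a _ ha => rw [map_smul]; exact M.smul_mem c ha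
  · intro h
    have hd0 : B.repr (f (B 1)) 1 = 0 := hM0 _ (h (B 1))
    have hfz : ∀ y ∈ M, f y = 0 := by
      intro y hy
      induction hy using Submodule.span_induction with
      | mem z hz =>
        obtain ⟨n, hn, rfl⟩ := hz
        obtain ⟨k, rfl⟩ := PNat.exists_eq_succ_of_ne_one hn.ne'
        rw [← hbr1, hf, hbr_eq, hd0, zero_smul]
      | zero => exact map_zero f
      | add a b _ _ ha hb => rw [map_add, ha, hb, add_zero]
      | smul c a _ ha => rw [map_smul, ha, smul_zero]
    ext x
    simp only [LinearMap.comp_apply, LinearMap.zero_apply]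
    exact hfz (f x) (h x)
end

section
/- Let L be the infinite-dimensional cyclic Leibniz algebra over a field F (basis {a_n | n ≥ 1}, [a_1,a_n] = a_{n+1}, [a_m,a_k] = 0 for m > 1). If f and g are endomorphisms of L with f(L) ⊆ [L,L] and g(L) ⊆ [L,L], then f ∘ g = 0; moreover, for any endomorphism h of L, both h ∘ f and f ∘ h map L into [L,L]. Thus S = {f endomorphism | f(L) ⊆ [L,L]} is a two-sided ideal of the endomorphism monoid of L with zero multiplication. -/
/-- For the infinite dimensional cyclic Leibniz algebra with basis `{a_n | n ≥ 1}`: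
the set `S` of endomorphisms whose image lies in `[L,L] = span {a_n | n ≥ 2}` is a
two-sided ideal of the endomorphism monoid with zero multiplication: if `f, g ∈ S` then
`f ∘ g = 0`, and for any endomorphism `h` both `h ∘ f` and `f ∘ h` map `L` into `[L,L]`. -/
theorem stmt13
    (F : Type*) [Field F] (L : Type*) [AddCommGroup L] [Module F L]
    (br : L →ₗ[F] L →ₗ[F] L) (B : Module.Basis ℕ+ F L)
    (hleib : ∀ a b c : L, br a (br b c) = br (br a b) c + br b (br a c))
    (hbr1 : ∀ n : ℕ+, br (B 1) (B n) = B (n + 1))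
    (hbr2 : ∀ m k : ℕ+, 1 < m → br (B m) (B k) = 0) :
    (∀ f g : L →ₗ[F] L, (∀ x y : L, f (br x y) = br (f x) (f y)) →
      (∀ x y : L, g (br x y) = br (g x) (g y)) →
      (∀ x : L, f x ∈ Submodule.span F {z : L | ∃ n : ℕ+, 1 < n ∧ z = B n}) →
      (∀ x : L, g x ∈ Submodule.span F {z : L | ∃ n : ℕ+, 1 < n ∧ z = B n}) →
      f ∘ₗ g = 0) ∧
    (∀ f h : L →ₗ[F] L, (∀ x y : L, f (br x y) = br (f x) (f y)) →
      (∀ x y : L, h (br x y) = br (h x) (h y)) →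
      (∀ x : L, f x ∈ Submodule.span F {z : L | ∃ n : ℕ+, 1 < n ∧ z = B n}) →
      (∀ x : L, (h ∘ₗ f) x ∈ Submodule.span F {z : L | ∃ n : ℕ+, 1 < n ∧ z = B n}) ∧
      (∀ x : L, (f ∘ₗ h) x ∈ Submodule.span F {z : L | ∃ n : ℕ+, 1 < n ∧ z = B n})) := by
  set S : Submodule F L := Submodule.span F {z : L | ∃ n : ℕ+, 1 < n ∧ z = B n} with hS
  -- basis brackets lie in S
  have hbb : ∀ m k : ℕ+, br (B m) (B k) ∈ S := by
    intro m k
    rcases m.one_le.lt_or_eq with hm | hm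
    · rw [hbr2 m k hm]; exact S.zero_mem
    · rw [← hm, hbr1 k]
      exact Submodule.subset_span ⟨k + 1, PNat.lt_add_left 1 k, rfl⟩
  -- every bracket lies in S
  have hbrS : ∀ x y : L, br x y ∈ S := by
    have step1 : ∀ (m : ℕ+) (y : L), br (B m) y ∈ S := by
      intro m y
      have hle : Submodule.span F (Set.range B) ≤ S.comap (br (B m)) := by
        rw [Submodule.span_le]
        rintro _ ⟨k, rfl⟩
        exact hbb m k
      exact hle (by rw [B.span_eq]; trivial)
    intro x y
    have hle : Submodule.span F (Set.range B) ≤ S.comap ((br.flip) y) := by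
      rw [Submodule.span_le]
      rintro _ ⟨m, rfl⟩
      exact step1 m y
    exact hle (by rw [B.span_eq]; trivial)
  -- elements of S act trivially on the left
  have hS0 : ∀ z ∈ S, ∀ y : L, br z y = 0 := by
    intro z hz y
    have hle : S ≤ LinearMap.ker ((br.flip) y) := by
      rw [hS, Submodule.span_le]
      rintro _ ⟨n, hn, rfl⟩
      have hker2 : Submodule.span F (Set.range B) ≤ LinearMap.ker (br (B n)) := by
        rw [Submodule.span_le]
        rintro _ ⟨k, rfl⟩
        exact hbr2 n k hn
      have : B n ∈ LinearMap.ker ((br.flip) y) := hker2 (by rw [B.span_eq]; trivial)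
      exact this
    exact hle hz
  -- decomposition of B n for 1 < n
  have hdec : ∀ n : ℕ+, 1 < n → ∃ m : ℕ+, n = m + 1 := by
    intro n hn
    have h1 : (1 : ℕ) < (n : ℕ) := hn
    refine ⟨⟨(n : ℕ) - 1, by omega⟩, ?_⟩
    apply PNat.coe_injective
    simp [PNat.add_coe]
    exact PNat.eq (show (n : ℕ) = (n : ℕ) - 1 + 1 by omega)
  constructor
  · intro f g hf hg hfS hgS
    have hker : S ≤ LinearMap.ker f := by
      rw [hS, Submodule.span_le]
      rintro _ ⟨n, hn, rfl⟩
      obtain ⟨m, rfl⟩ := hdec n hn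
      have : f (B (m + 1)) = br (f (B 1)) (f (B m)) := by rw [← hbr1 m, hf]
      simp only [SetLike.mem_coe, LinearMap.mem_ker, this]
      exact hS0 _ (hfS (B 1)) _
    ext x
    have : g x ∈ S := hgS x
    simpa using hker this
  · intro f h hf hh hfS
    have hhS : S ≤ S.comap h := by
      rw [hS, Submodule.span_le]
      rintro _ ⟨n, hn, rfl⟩
      obtain ⟨m, rfl⟩ := hdec n hn
      have : h (B (m + 1)) = br (h (B 1)) (h (B m)) := by rw [← hbr1 m, hh]
      simp only [SetLike.mem_coe, Submodule.mem_comap, this]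
      exact hbrS _ _
    exact ⟨fun x => hhS (hfS x), fun x => hfS (h x)⟩
end

section
/- Let L be the infinite-dimensional cyclic Leibniz algebra over a field F (basis {a_n | n ≥ 1}, [a_1,a_n] = a_{n+1}, [a_m,a_k] = 0 for m > 1). Every endomorphism f of L with f(a_1) ∉ [L,L] (i.e. the coefficient γ_1 of a_1 in f(a_1) is nonzero) is injective. -/
/-- For the infinite dimensional cyclic Leibniz algebra with basis `{a_n | n ≥ 1}`:
every endomorphism `f` with `f(a₁) ∉ [L,L] = span {a_n | n ≥ 2}` is injective. -/
theorem stmt14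
    (F : Type*) [Field F] (L : Type*) [AddCommGroup L] [Module F L]
    (br : L →ₗ[F] L →ₗ[F] L) (B : Module.Basis ℕ+ F L)
    (hleib : ∀ a b c : L, br a (br b c) = br (br a b) c + br b (br a c))
    (hbr1 : ∀ n : ℕ+, br (B 1) (B n) = B (n + 1))
    (hbr2 : ∀ m k : ℕ+, 1 < m → br (B m) (B k) = 0)
    (f : L →ₗ[F] L) (hf : ∀ x y : L, f (br x y) = br (f x) (f y))
    (h1 : f (B 1) ∉ Submodule.span F {x : L | ∃ n : ℕ+, 1 < n ∧ x = B n}) :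
    Function.Injective f := by
  set γ : F := B.repr (f (B 1)) 1 with hγdef
  -- γ ≠ 0
  have hγ0 : γ ≠ 0 := by
    intro h0
    apply h1
    have hset : {x : L | ∃ n : ℕ+, 1 < n ∧ x = B n} = B '' {n : ℕ+ | 1 < n} := by
      ext x
      constructor
      · rintro ⟨n, hn, rfl⟩; exact ⟨n, hn, rfl⟩
      · rintro ⟨n, hn, rfl⟩; exact ⟨n, hn, rfl⟩
    rw [hset, Module.Basis.mem_span_image]
    intro n hn
    simp only [Finset.mem_coe, Finsupp.mem_support_iff] at hn
    simp only [Set.mem_setOf_eq]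
    rcases eq_or_lt_of_le n.one_le with h | h
    · exact absurd (h ▸ h0) hn
    · exact h
  -- bracket with B m for m > 1 is zero
  have hbr0 : ∀ m : ℕ+, 1 < m → br (B m) = 0 := fun m hm =>
    B.ext fun k => by rw [hbr2 m k hm]; rfl
  -- key: br (f (B 1)) = γ • br (B 1)
  have key : br (f (B 1)) = γ • br (B 1) := by
    conv_lhs => rw [← B.linearCombination_repr (f (B 1))]
    rw [Finsupp.linearCombination_apply, map_finsuppSum br]
    rw [Finsupp.sum_eq_single (1 : ℕ+)]
    · rw [map_smul]
    · intro n _ hn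
      rw [map_smul, hbr0 n (lt_of_le_of_ne n.one_le (Ne.symm hn)), smul_zero]
    · intro _; rw [zero_smul, map_zero]
  have fsucc : ∀ n : ℕ+, f (B (n + 1)) = γ • br (B 1) (f (B n)) := by
    intro n
    rw [← hbr1 n, hf, key]
    rfl
  -- coord lemmas for the shift S = br (B 1)
  have c1 : ∀ y : L, B.repr (br (B 1) y) 1 = 0 := by
    have h : (B.coord 1).comp (br (B 1)) = 0 := by
      apply B.ext
      intro m
      have hm1 : (m + 1 : ℕ+) ≠ 1 := by
        intro h
        have := congrArg (PNat.val) h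
        simp at this
      simp [Module.Basis.coord_apply, hbr1, Module.Basis.repr_self, Finsupp.single_apply, hm1]
    intro y
    simpa using LinearMap.congr_fun h y
  have c2 : ∀ (k : ℕ+) (y : L), B.repr (br (B 1) y) (k + 1) = B.repr y k := by
    intro k
    have h : (B.coord (k + 1)).comp (br (B 1)) = B.coord k := by
      apply B.ext
      intro m
      simp [Module.Basis.coord_apply, hbr1, Module.Basis.repr_self, Finsupp.single_apply]
    intro y
    simpa using LinearMap.congr_fun h y
  -- main induction
  have main : ∀ n : ℕ+, (∀ k : ℕ+, k < n → B.repr (f (B n)) k = 0) ∧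
      B.repr (f (B n)) n = γ ^ (n : ℕ) := by
    intro n
    induction n using PNat.recOn with
    | one =>
      constructor
      · intro k hk; exact absurd hk (not_lt.mpr k.one_le)
      · simp [hγdef]
    | succ n ih =>
      rw [fsucc n]
      constructor
      · intro k hk
        rw [map_smul, Finsupp.smul_apply]
        rcases eq_or_ne k 1 with rfl | hk1
        · rw [c1, smul_zero]
        · obtain ⟨j, rfl⟩ := PNat.exists_eq_succ_of_ne_one hk1
          rw [c2, ih.1 j (by exact lt_of_add_lt_add_right hk), smul_zero]
      · rw [map_smul, Finsupp.smul_apply, c2, ih.2, smul_eq_mul]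
        simp [pow_succ', PNat.add_coe]
  -- conclude injectivity
  rw [← LinearMap.ker_eq_bot, LinearMap.ker_eq_bot']
  intro x hx
  by_contra hx0
  have hsupp : (B.repr x).support.Nonempty := by
    rw [Finsupp.support_nonempty_iff]
    intro h
    exact hx0 (by simpa using congrArg B.repr.symm h)
  set n0 := (B.repr x).support.min' hsupp with hn0def
  have hn0 : B.repr x n0 ≠ 0 :=
    Finsupp.mem_support_iff.mp ((B.repr x).support.min'_mem hsupp)
  have hx' : f x = ∑ n ∈ (B.repr x).support, B.repr x n • f (B n) := by
    conv_lhs => rw [← B.linearCombination_repr x, Finsupp.linearCombination_apply]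
    rw [map_finsuppSum f]
    exact Finset.sum_congr rfl fun n _ => map_smul f _ _
  have hcoef : B.repr (f x) n0 = B.repr x n0 * γ ^ (n0 : ℕ) := by
    rw [hx', map_sum, Finsupp.finset_sum_apply]
    rw [Finset.sum_eq_single n0]
    · rw [map_smul, Finsupp.smul_apply, (main n0).2, smul_eq_mul]
    · intro n hn hne
      rw [map_smul, Finsupp.smul_apply,
        (main n).1 n0 (lt_of_le_of_ne ((B.repr x).support.min'_le n hn) (Ne.symm hne)),
        smul_zero]
    · intro h; exact absurd ((B.repr x).support.min'_mem hsupp) h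
  rw [hx] at hcoef
  simp only [map_zero, Finsupp.coe_zero, Pi.zero_apply] at hcoef
  exact mul_ne_zero hn0 (pow_ne_zero _ hγ0) hcoef.symm
end

section
/- Let L be the infinite-dimensional cyclic Leibniz algebra over a field F (basis {a_n | n ≥ 1}, [a_1,a_n] = a_{n+1}, [a_m,a_k] = 0 for m > 1). The group of all automorphisms of L is isomorphic to the multiplicative group F^× of the field F; explicitly, the map sending an automorphism f to the coefficient of a_1 in f(a_1) is a group isomorphism Aut(L) → F^×. -/
/-- The automorphism group of a Leibniz algebra `(L, br)`: the subgroup of linear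
automorphisms preserving the bracket. -/
def leibnizAut (F : Type*) [Field F] (L : Type*) [AddCommGroup L] [Module F L]
    (br : L →ₗ[F] L →ₗ[F] L) : Subgroup (L ≃ₗ[F] L) where
  carrier := {f : L ≃ₗ[F] L | ∀ x y : L, f (br x y) = br (f x) (f y)}
  one_mem' := by intro x y; rfl
  mul_mem' := by
    intro f g hf hg x y
    show f (g (br x y)) = br (f (g x)) (f (g y))
    rw [hg, hf]
  inv_mem' := by
    intro f hf x y
    apply f.injective
    show f (f.symm (br x y)) = _
    rw [hf, f.apply_symm_apply]
    show br x y = br (f (f.symm x)) (f (f.symm y))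
    rw [f.apply_symm_apply, f.apply_symm_apply]

set_option linter.unusedSectionVars false
namespace Stmt15
variable {F : Type*} [Field F] {L : Type*} [AddCommGroup L] [Module F L]

lemma succPNat_add_one (n : ℕ) : (n+1).succPNat = n.succPNat + 1 := by
  apply PNat.coe_injective; simp [Nat.succPNat, PNat.add_coe]; rfl

section
variable (br : L →ₗ[F] L →ₗ[F] L) (B : Module.Basis ℕ+ F L)

/-- coefficient of a₁ -/
noncomputable def c : L →ₗ[F] F := (Finsupp.lapply 1).comp B.repr.toLinearMap

lemma c_apply (x : L) : c B x = B.repr x 1 := rfl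

lemma c_basis_one : c B (B 1) = 1 := by simp [c_apply]

lemma c_basis_ne (n : ℕ+) (h : n ≠ 1) : c B (B n) = 0 := by
  simp [c_apply, Finsupp.single_apply, h]

/-- the shift map -/
noncomputable def S : L →ₗ[F] L := br (B 1)

variable (hbr1 : ∀ n : ℕ+, br (B 1) (B n) = B (n + 1))
variable (hbr2 : ∀ m k : ℕ+, 1 < m → br (B m) (B k) = 0)
include hbr1 hbr2

lemma S_basis (n : ℕ+) : S br B (B n) = B (n + 1) := hbr1 n

lemma br_basis_zero (m : ℕ+) (h : 1 < m) : br (B m) = 0 :=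
  B.ext fun k => hbr2 m k h

/-- key structure lemma -/
lemma br_eq (x y : L) : br x y = c B x • S br B y := by
  have : br = (c B).smulRight (S br B) := by
    apply B.ext
    intro n
    rcases eq_or_ne n 1 with rfl | hn
    · ext y; simp [c_basis_one, S]
    · rw [br_basis_zero br B hbr1 hbr2 n (lt_of_le_of_ne n.one_le (Ne.symm hn))]
      ext y; simp [c_basis_ne B n hn]
  conv_lhs => rw [this]
  rfl

lemma repr_S (z : L) (n : ℕ+) : B.repr (S br B z) (n + 1) = B.repr z n := by
  have : (Finsupp.lapply (n+1)).comp (B.repr.toLinearMap.comp (S br B))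
      = (Finsupp.lapply n).comp B.repr.toLinearMap := by
    apply B.ext
    intro m
    simp [S_basis br B hbr1 hbr2, Finsupp.single_apply, add_left_inj]
  exact DFunLike.congr_fun this z

lemma repr_S_one (z : L) : B.repr (S br B z) 1 = 0 := by
  have : (Finsupp.lapply 1).comp (B.repr.toLinearMap.comp (S br B)) = 0 := by
    apply B.ext
    intro m
    have : m + 1 ≠ 1 := by
      intro h; exact absurd (congrArg (PNat.natPred) h) (by simp [PNat.natPred])
    simp [S_basis br B hbr1 hbr2, Finsupp.single_apply, this]
  exact DFunLike.congr_fun this z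

lemma S_inj : Function.Injective (S br B) := by
  intro a b hab
  apply B.repr.injective
  ext n
  have := repr_S br B hbr1 hbr2 a n
  rw [hab, repr_S br B hbr1 hbr2 b n] at this
  simp [this]


noncomputable def d (n : ℕ) : L := B n.succPNat
noncomputable def r (x : L) (n : ℕ) : F := B.repr x n.succPNat

omit hbr1 hbr2

lemma d_zero : d B 0 = B 1 := rfl
lemma r_zero (x : L) : r B x 0 = c B x := rfl
lemma r_add (x y : L) (n : ℕ) : r B (x + y) n = r B x n + r B y n := by simp [r]
lemma r_smul (a : F) (x : L) (n : ℕ) : r B (a • x) n = a * r B x n := by simp [r]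
lemma r_d (n m : ℕ) : r B (d B n) m = if n = m then 1 else 0 := by
  simp [r, d, Finsupp.single_apply, Nat.succPNat_inj]
lemma eq_zero_of_r (x : L) (h : ∀ n, r B x n = 0) : x = 0 := by
  apply B.repr.map_eq_zero_iff.mp
  ext n
  have := h n.natPred
  rwa [r, PNat.succPNat_natPred] at this

include hbr1 hbr2

lemma S_d (n : ℕ) : S br B (d B n) = d B (n+1) := by
  rw [d, S_basis br B hbr1 hbr2, d, succPNat_add_one]

lemma r_S_zero (z : L) : r B (S br B z) 0 = 0 := repr_S_one br B hbr1 hbr2 z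

lemma r_S (z : L) (n : ℕ) : r B (S br B z) (n+1) = r B z n := by
  rw [r, succPNat_add_one, repr_S br B hbr1 hbr2, r]

lemma r_Spow (j : ℕ) (z : L) (i : ℕ) : r B ((S br B ^ j) z) (i + j) = r B z i := by
  induction j with
  | zero => rfl
  | succ j ih =>
    have : (S br B ^ (j+1)) z = S br B ((S br B ^ j) z) := by
      rw [pow_succ']; rfl
    rw [this, show i + (j+1) = (i+j)+1 by omega, r_S br B hbr1 hbr2, ih]

lemma r_Spow_top (z : L) (M : ℕ) (hz : ∀ i, M < i → r B z i = 0) (j : ℕ) :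
    ∀ i, M + j < i → r B ((S br B ^ j) z) i = 0 := by
  induction j with
  | zero => intro i hi; exact hz i (by omega)
  | succ j ih =>
    intro i hi
    have hS : (S br B ^ (j+1)) z = S br B ((S br B ^ j) z) := by
      rw [pow_succ']; rfl
    rcases i with _ | i'
    · omega
    · rw [hS, r_S br B hbr1 hbr2]
      exact ih i' (by omega)

omit hbr1 hbr2 in
lemma functional_sum (ψ : L →ₗ[F] F) (x : L) :
    ψ x = (B.repr x).sum (fun i a => a * ψ (B i)) := by
  conv_lhs => rw [← B.linearCombination_repr x, Finsupp.linearCombination_apply]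
  rw [map_finsuppSum]
  exact Finsupp.sum_congr (fun i _ => by rw [map_smul, smul_eq_mul])


omit hbr1 hbr2 in
lemma smul_cancel {a b : F} {v : L} (hv : v ≠ 0) (h : a • v = b • v) : a = b := by
  by_contra hne
  apply hv
  have h0 : (a - b) • v = 0 := by rw [sub_smul, h, sub_self]
  rcases smul_eq_zero.mp h0 with h1 | h1
  · exact absurd (sub_eq_zero.mp h1) hne
  · exact h1

lemma f_S (f : L ≃ₗ[F] L) (hf : ∀ x y : L, f (br x y) = br (f x) (f y)) (y : L) :
    f (S br B y) = c B (f (B 1)) • S br B (f y) := by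
  have h := hf (B 1) y
  rw [br_eq br B hbr1 hbr2 (f (B 1)) (f y)] at h
  exact h

lemma f_c (f : L ≃ₗ[F] L) (hf : ∀ x y : L, f (br x y) = br (f x) (f y)) (x : L) :
    c B (f x) = c B (f (B 1)) * c B x := by
  have h := hf x (B 1)
  rw [br_eq br B hbr1 hbr2 x (B 1), br_eq br B hbr1 hbr2 (f x) (f (B 1)),
    map_smul, f_S br B hbr1 hbr2 f hf (B 1), smul_smul] at h
  have hne : S br B (f (B 1)) ≠ 0 := by
    intro h0
    have h1 : f (B 1) = 0 := S_inj br B hbr1 hbr2 (by rw [h0, map_zero])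
    exact B.ne_zero 1 (f.injective (by rw [h1, map_zero]))
  have h2 := smul_cancel hne h
  rw [← h2, mul_comm]

lemma fix_of_alpha_one (f : L ≃ₗ[F] L) (hf : ∀ x y : L, f (br x y) = br (f x) (f y))
    (hα : c B (f (B 1)) = 1) (x : L) : f x = x := by
  have hfS : ∀ y, f (S br B y) = S br B (f y) := fun y => by
    rw [f_S br B hbr1 hbr2 f hf, hα, one_smul]
  have hfc : ∀ z, c B (f z) = c B z := fun z => by
    rw [f_c br B hbr1 hbr2 f hf, hα, one_mul]
  have h1 : f (B 1) = B 1 := by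
    by_contra hne
    set w := f (B 1) - B 1 with hw
    have hw0 : w ≠ 0 := sub_ne_zero.mpr hne
    have hfd : ∀ n : ℕ, f (d B n) = d B n + (S br B ^ n) w := by
      intro n
      induction n with
      | zero =>
        show f (B 1) = B 1 + (S br B ^ 0) w
        rw [pow_zero, Module.End.one_apply, hw, add_sub_cancel]
      | succ n ih =>
        rw [← S_d br B hbr1 hbr2 n, hfS, ih, map_add, S_d br B hbr1 hbr2 n]
        congr 1
        rw [pow_succ']
        rfl
    have hw1 : r B w 0 = 0 := by
      rw [r_zero, hw, map_sub, hfc, sub_self]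
    have hsupp : ((B.repr) w).support.Nonempty :=
      Finsupp.support_nonempty_iff.mpr (fun h0 => hw0 (B.repr.map_eq_zero_iff.mp h0))
    set m' : ℕ+ := ((B.repr) w).support.max' hsupp with hm'
    set mm : ℕ := m'.natPred with hmm
    have hm'succ : mm.succPNat = m' := PNat.succPNat_natPred m'
    have hwm : r B w mm ≠ 0 := by
      rw [r, hm'succ]
      exact Finsupp.mem_support_iff.mp (Finset.max'_mem _ hsupp)
    have hmm0 : mm ≠ 0 := by
      intro h0
      apply hwm
      rw [r, h0]
      exact hw1
    have hwtop : ∀ i, mm < i → r B w i = 0 := by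
      intro i hi
      by_contra h0
      have hmem : i.succPNat ∈ ((B.repr) w).support := Finsupp.mem_support_iff.mpr h0
      have hle : i.succPNat ≤ m' := Finset.le_max' _ _ hmem
      rw [← hm'succ, Nat.succPNat_le_succPNat] at hle
      omega
    obtain ⟨x₀, hx₀⟩ := f.surjective (B 1)
    have hx0ne : x₀ ≠ 0 := fun h0 => B.ne_zero 1 (by rw [← hx₀, h0, map_zero])
    have hsupp2 : ((B.repr) x₀).support.Nonempty :=
      Finsupp.support_nonempty_iff.mpr (fun h0 => hx0ne (B.repr.map_eq_zero_iff.mp h0))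
    set k' : ℕ+ := ((B.repr) x₀).support.max' hsupp2 with hk'
    set kk : ℕ := k'.natPred with hkk
    have hk'succ : kk.succPNat = k' := PNat.succPNat_natPred k'
    have hxk : B.repr x₀ k' ≠ 0 := Finsupp.mem_support_iff.mp (Finset.max'_mem _ hsupp2)
    set ψ : L →ₗ[F] F :=
      (Finsupp.lapply (mm + kk).succPNat).comp (B.repr.toLinearMap.comp (f : L →ₗ[F] L)) with hψ
    have hψr : ∀ z : L, ψ z = r B (f z) (mm + kk) := fun z => rfl
    have hψd : ∀ nn : ℕ, nn ≤ kk → ψ (d B nn) = if nn = kk then r B w mm else 0 := by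
      intro nn hnn
      rw [hψr, hfd nn, r_add, r_d]
      have hne1 : ¬ (nn = mm + kk) := by omega
      rw [if_neg hne1, zero_add]
      rcases eq_or_ne nn kk with rfl | hne2
      · rw [if_pos rfl, r_Spow br B hbr1 hbr2]
      · rw [if_neg hne2]
        exact r_Spow_top br B hbr1 hbr2 w mm hwtop nn (mm + kk) (by omega)
    have hψsum := functional_sum B ψ x₀
    rw [Finsupp.sum] at hψsum
    rw [Finset.sum_eq_single_of_mem k' (Finset.max'_mem _ hsupp2)] at hψsum
    · have hψk : ψ (B k') = r B w mm := by
        have := hψd kk le_rfl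
        rw [if_pos rfl] at this
        rw [← this]
        congr 1
        rw [d, hk'succ]
      rw [hψk, hψr, hx₀] at hψsum
      have hL : r B (B 1) (mm + kk) = 0 := by
        rw [r]
        have : (mm + kk).succPNat ≠ 1 := by
          intro hc
          have h2 : mm + kk = 0 := Nat.succPNat_inj.mp hc
          omega
        simp [Finsupp.single_apply, Ne.symm this]
      rw [hL] at hψsum
      exact hxk (by
        rcases mul_eq_zero.mp hψsum.symm with h0 | h0
        · exact h0
        · exact absurd h0 hwm)
    · intro n hn hne
      have hnle : n ≤ k' := Finset.le_max' _ _ hn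
      have hB : B n = d B n.natPred := by rw [d, PNat.succPNat_natPred]
      have hle2 : n.natPred ≤ kk := by
        rw [hkk]
        exact PNat.natPred_le_natPred.mpr hnle
      have hne2 : n.natPred ≠ kk := by
        intro h0
        apply hne
        rw [← PNat.succPNat_natPred n, h0, hk'succ]
      rw [hB, hψd n.natPred hle2, if_neg hne2, mul_zero]
  have hd1 : ∀ n : ℕ, f (d B n) = d B n := by
    intro n
    induction n with
    | zero => exact h1
    | succ n ih => rw [← S_d br B hbr1 hbr2 n, hfS, ih]
  have hB1 : ∀ n : ℕ+, f (B n) = B n := by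
    intro n
    have := hd1 n.natPred
    rwa [d, PNat.succPNat_natPred] at this
  have : (f : L →ₗ[F] L) = LinearMap.id := B.ext fun n => hB1 n
  exact DFunLike.congr_fun this x


omit hbr1 hbr2

noncomputable def g0 (α : F) : L →ₗ[F] L := B.constr F (fun n => α ^ (n:ℕ) • B n)

lemma g0_basis (α : F) (n : ℕ+) : g0 B α (B n) = α ^ (n:ℕ) • B n := B.constr_basis _ _ _

lemma g0_comp (a b : F) (hab : a * b = 1) : (g0 B a).comp (g0 B b) = LinearMap.id := by
  apply B.ext
  intro n
  rw [LinearMap.comp_apply, g0_basis, map_smul, g0_basis, smul_smul, ← mul_pow, mul_comm b a, hab,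
    one_pow, one_smul, LinearMap.id_apply]

noncomputable def gequiv (α : F) (hα : α ≠ 0) : L ≃ₗ[F] L :=
  LinearEquiv.ofLinear (g0 B α) (g0 B α⁻¹)
    (g0_comp B α α⁻¹ (mul_inv_cancel₀ hα)) (g0_comp B α⁻¹ α (inv_mul_cancel₀ hα))

lemma gequiv_apply (α : F) (hα : α ≠ 0) (x : L) : gequiv B α hα x = g0 B α x := rfl

include hbr1 hbr2

lemma g0_c (α : F) (x : L) : c B (g0 B α x) = α * c B x := by
  have h : (c B).comp (g0 B α) = α • c B := by
    apply B.ext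
    intro n
    rw [LinearMap.comp_apply, g0_basis, map_smul, LinearMap.smul_apply]
    rcases eq_or_ne n 1 with rfl | hn
    · rw [c_basis_one, PNat.one_coe, pow_one]
    · rw [c_basis_ne B n hn, smul_zero, smul_zero]
  have := DFunLike.congr_fun h x
  simpa using this

lemma g0_S (α : F) (z : L) : g0 B α (S br B z) = α • S br B (g0 B α z) := by
  have h : (g0 B α).comp (S br B) = α • ((S br B).comp (g0 B α)) := by
    apply B.ext
    intro n
    rw [LinearMap.comp_apply, S_basis br B hbr1 hbr2, g0_basis, LinearMap.smul_apply,
      LinearMap.comp_apply, g0_basis, map_smul, S_basis br B hbr1 hbr2]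
    rw [smul_smul, PNat.add_coe, PNat.one_coe, pow_succ']
  exact DFunLike.congr_fun h z

lemma gequiv_mem (α : F) (hα : α ≠ 0) (x y : L) :
    gequiv B α hα (br x y) = br (gequiv B α hα x) (gequiv B α hα y) := by
  rw [gequiv_apply, gequiv_apply, gequiv_apply,
    br_eq br B hbr1 hbr2 x y, br_eq br B hbr1 hbr2 (g0 B α x) (g0 B α y),
    map_smul, g0_S br B hbr1 hbr2, g0_c br B hbr1 hbr2, smul_smul,
    mul_comm ((c B) x) α]

end
end Stmt15
/-- For the infinite dimensional cyclic Leibniz algebra with basis `{a_n | n ≥ 1}`: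
the group of all automorphisms of `L` is isomorphic to the multiplicative group `Fˣ`;
explicitly, sending an automorphism `f` to the coefficient of `a₁` in `f(a₁)`
is a group isomorphism. -/
theorem stmt15
    (F : Type*) [Field F] (L : Type*) [AddCommGroup L] [Module F L]
    (br : L →ₗ[F] L →ₗ[F] L) (B : Module.Basis ℕ+ F L)
    (hleib : ∀ a b c : L, br a (br b c) = br (br a b) c + br b (br a c))
    (hbr1 : ∀ n : ℕ+, br (B 1) (B n) = B (n + 1))
    (hbr2 : ∀ m k : ℕ+, 1 < m → br (B m) (B k) = 0) :
    ∃ e : leibnizAut F L br ≃* Fˣ,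
      ∀ f : leibnizAut F L br, ((e f : Fˣ) : F) = B.repr ((f : L ≃ₗ[F] L) (B 1)) 1 := by
  classical
  have key : ∀ f : leibnizAut F L br,
      Stmt15.c B ((f : L ≃ₗ[F] L) (B 1)) * Stmt15.c B ((f : L ≃ₗ[F] L).symm (B 1)) = 1 := by
    intro f
    have h := Stmt15.f_c br B hbr1 hbr2 (f : L ≃ₗ[F] L) f.2 ((f : L ≃ₗ[F] L).symm (B 1))
    rw [LinearEquiv.apply_symm_apply, Stmt15.c_basis_one] at h
    exact h.symm
  set φ : leibnizAut F L br →* Fˣ := {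
    toFun := fun f => ⟨Stmt15.c B ((f : L ≃ₗ[F] L) (B 1)),
      Stmt15.c B ((f : L ≃ₗ[F] L).symm (B 1)), key f, by rw [mul_comm]; exact key f⟩
    map_one' := by
      apply Units.ext
      show Stmt15.c B (B 1) = 1
      exact Stmt15.c_basis_one B
    map_mul' := by
      intro f g
      apply Units.ext
      show Stmt15.c B ((f : L ≃ₗ[F] L) ((g : L ≃ₗ[F] L) (B 1))) = _
      exact Stmt15.f_c br B hbr1 hbr2 _ f.2 _ } with hφ
  have hinj : Function.Injective φ := by
    rw [injective_iff_map_eq_one]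
    intro f hf1
    have hα : Stmt15.c B ((f : L ≃ₗ[F] L) (B 1)) = 1 := congrArg Units.val hf1
    apply Subtype.ext
    apply LinearEquiv.toLinearMap_injective
    apply LinearMap.ext
    intro x
    exact Stmt15.fix_of_alpha_one br B hbr1 hbr2 _ f.2 hα x
  have hsurj : Function.Surjective φ := by
    intro u
    refine ⟨⟨Stmt15.gequiv B (u : F) u.ne_zero, Stmt15.gequiv_mem br B hbr1 hbr2 _ _⟩, ?_⟩
    apply Units.ext
    show Stmt15.c B (Stmt15.gequiv B (u : F) u.ne_zero (B 1)) = (u : F)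
    rw [Stmt15.gequiv_apply, Stmt15.g0_basis, map_smul, Stmt15.c_basis_one,
      PNat.one_coe, pow_one, smul_eq_mul, mul_one]
  exact ⟨MulEquiv.ofBijective φ ⟨hinj, hsurj⟩, fun f => rfl⟩
end

section
/- Let L be the infinite-dimensional cyclic Leibniz algebra over a field F (basis {a_n | n ≥ 1}, [a_1,a_n] = a_{n+1}, [a_m,a_k] = 0 for m > 1). If f is a derivation of L with f(a_1) = Σ_n γ_n a_n (finitely many γ_n nonzero), then for every s ≥ 1, f(a_s) = s·γ_1 a_s + Σ_{k≥2} γ_k a_{k+s-1}. -/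
/-- For the infinite dimensional cyclic Leibniz algebra with basis `{a_n | n ≥ 1}`:
if `f` is a derivation with `f(a₁) = Σ_n γ_n a_n`, then
`f(a_s) = s·γ₁ a_s + Σ_{k≥2} γ_k a_{k+s-1}` for all `s ≥ 1`. -/
theorem stmt17
    (F : Type*) [Field F] (L : Type*) [AddCommGroup L] [Module F L]
    (br : L →ₗ[F] L →ₗ[F] L) (B : Module.Basis ℕ+ F L)
    (hleib : ∀ a b c : L, br a (br b c) = br (br a b) c + br b (br a c))
    (hbr1 : ∀ n : ℕ+, br (B 1) (B n) = B (n + 1))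
    (hbr2 : ∀ m k : ℕ+, 1 < m → br (B m) (B k) = 0)
    (f : L →ₗ[F] L) (hf : ∀ x y : L, f (br x y) = br (f x) y + br x (f y)) :
    ∀ s : ℕ+, f (B s) =
      (((s : ℕ) : F) * B.repr (f (B 1)) 1) • B s +
        ((B.repr (f (B 1))).erase 1).sum fun k c => c • B (k + s - 1) := by
  set γ := B.repr (f (B 1)) with hγ
  have key : ∀ a b : ℕ+, 1 < a + b → a + b - 1 + 1 = a + b := by
    intro a b h
    apply PNat.coe_injective
    have ha := a.pos; have hb := b.pos
    rw [PNat.add_coe, PNat.sub_coe, if_pos h, PNat.add_coe, PNat.one_coe]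
    omega
  have hpnat : ∀ k s : ℕ+, k + s - 1 + 1 = k + s := fun k s =>
    key k s (lt_of_le_of_lt s.one_le (PNat.lt_add_left s k))
  have hpnat2 : ∀ k s : ℕ+, k + (s + 1) - 1 = k + s := by
    intro k s
    have h := hpnat (k + s) 1
    calc k + (s + 1) - 1 = (k + s) + 1 - 1 := by rw [add_assoc]
      _ = k + s := add_right_cancel h
  have hsub1 : ∀ k : ℕ+, k + 1 - 1 = k := fun k => add_right_cancel (hpnat k 1)
  -- decomposition of f (B 1)
  have hdec : f (B 1) = γ 1 • B 1 + (γ.erase 1).sum fun k c => c • B k := by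
    conv_lhs => rw [← B.linearCombination_repr (f (B 1)), Finsupp.linearCombination_apply, ← hγ,
      ← Finsupp.single_add_erase 1 γ]
    rw [Finsupp.sum_add_index (by simp) (by intros; rw [add_smul])]
    rw [Finsupp.sum_single_index (by simp)]
  intro s
  induction s using PNat.recOn with
  | one =>
    simp only [PNat.one_coe, Nat.cast_one, one_mul]
    rw [hdec]
    congr 1
    refine Finsupp.sum_congr fun k _ => ?_
    rw [hsub1]
  | succ s ih =>
    have hB : (B (s + 1) : L) = br (B 1) (B s) := (hbr1 s).symm
    have hfx : f (B (s + 1)) = br (f (B 1)) (B s) + br (B 1) (f (B s)) := by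
      rw [hB, hf]
    -- first term
    have h1 : br (f (B 1)) (B s) = γ 1 • B (s + 1) := by
      rw [hdec]
      simp only [map_add, map_smul, LinearMap.add_apply, LinearMap.smul_apply, hbr1]
      have hz : (br ((γ.erase 1).sum fun k c => c • B k)) (B s) = 0 := by
        have := map_finsuppSum (br.flip (B s)) (γ.erase 1) (fun k c => c • B k)
        simp only [LinearMap.flip_apply] at this
        rw [this]
        refine Finset.sum_eq_zero fun k hk => ?_
        have hk1 : k ≠ 1 := by
          intro h; subst h
          exact Finsupp.mem_support_iff.mp hk Finsupp.erase_same
        simp [hbr2 k s (lt_of_le_of_ne k.one_le (Ne.symm hk1))]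
      rw [hz, add_zero]
    have h2 : br (B 1) (f (B s)) =
        ((((s : ℕ)) : F) * γ 1) • B (s + 1) +
          (γ.erase 1).sum fun k c => c • B (k + (s + 1) - 1) := by
      rw [ih, map_add, map_smul, map_finsuppSum, hbr1]
      congr 1
      refine Finsupp.sum_congr fun k _ => ?_
      rw [map_smul, hbr1, hpnat, hpnat2]
    have hc : ((((s + 1 : ℕ+) : ℕ)) : F) = ((s : ℕ) : F) + 1 := by
      push_cast [PNat.add_coe]
      ring
    rw [hfx, h1, h2, hc]
    module
end

section
/- Let L be the infinite-dimensional cyclic Leibniz algebra over a field F (basis {a_n | n ≥ 1}, [a_1,a_n] = a_{n+1}, [a_m,a_k] = 0 for m > 1). For any γ_1 ∈ F and any finitely supported sequence (γ_k)_{k≥2} in F, the linear map f defined by f(a_s) = s·γ_1 a_s + Σ_{k≥2} γ_k a_{k+s-1} is a derivation of L. -/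
/-- For the infinite dimensional cyclic Leibniz algebra with basis `{a_n | n ≥ 1}`:
for any `γ₁ ∈ F` and any finitely supported sequence `(γ_k)_{k ≥ 2}` in `F`,
the linear map defined by `f(a_s) = s·γ₁ a_s + Σ_{k≥2} γ_k a_{k+s-1}`
is a derivation of `L`. -/
theorem stmt18
    (F : Type*) [Field F] (L : Type*) [AddCommGroup L] [Module F L]
    (br : L →ₗ[F] L →ₗ[F] L) (B : Module.Basis ℕ+ F L)
    (hleib : ∀ a b c : L, br a (br b c) = br (br a b) c + br b (br a c))
    (hbr1 : ∀ n : ℕ+, br (B 1) (B n) = B (n + 1))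
    (hbr2 : ∀ m k : ℕ+, 1 < m → br (B m) (B k) = 0)
    (γ₁ : F) (δ : ℕ+ →₀ F) (hδ : δ 1 = 0) (f : L →ₗ[F] L)
    (hfdef : ∀ s : ℕ+, f (B s) =
      (((s : ℕ) : F) * γ₁) • B s + δ.sum fun k c => c • B (k + s - 1)) :
    ∀ x y : L, f (br x y) = br (f x) y + br x (f y) := by
  have hgt : ∀ k m : ℕ+, 1 < m → (1:ℕ+) < k + m - 1 := by
    intro k m hm
    have hm' : (1:ℕ) < (m:ℕ) := by exact_mod_cast hm
    have hk' : (1:ℕ) ≤ (k:ℕ) := k.one_le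
    have hkm : (1:ℕ+) < k + m := hm.trans (PNat.lt_add_left m k)
    rw [← PNat.coe_lt_coe, PNat.sub_coe, if_pos hkm, PNat.add_coe, PNat.one_coe]
    omega
  have hsub : ∀ k n : ℕ+, k + (n + 1) - 1 = (k + n - 1) + 1 := by
    intro k n
    have h1 : (1 : ℕ+) < k + n :=
      lt_of_lt_of_le (by decide : (1:ℕ+) < 1 + 1) (add_le_add k.one_le n.one_le)
    have h2 : (1 : ℕ+) < k + (n + 1) := by
      rw [← add_assoc]; exact h1.trans (PNat.lt_add_right _ _)
    have h1' : (1:ℕ) < (k:ℕ) + (n:ℕ) := by exact_mod_cast h1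
    apply PNat.coe_injective
    rw [PNat.add_coe, PNat.sub_coe, PNat.sub_coe, if_pos h2, if_pos h1]
    push_cast
    omega
  have hcanc : ∀ k : ℕ+, k + 1 - 1 = k := by
    intro k
    apply PNat.coe_injective
    rw [PNat.sub_coe, if_pos (PNat.lt_add_left 1 k), PNat.add_coe, PNat.one_coe,
      Nat.add_sub_cancel]
  have key : ∀ m n : ℕ+, f (br (B m) (B n)) = br (f (B m)) (B n) + br (B m) (f (B n)) := by
    intro m n
    rcases eq_or_lt_of_le m.one_le with hm | hm
    · subst hm
      rw [hbr1, hfdef, hfdef, hfdef]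
      have h1 : br (((((1:ℕ+) : ℕ) : F) * γ₁) • B 1 + δ.sum fun k c => c • B (k + 1 - 1)) (B n)
          = γ₁ • B (n + 1) + 0 := by
        rw [map_add, LinearMap.add_apply, map_smul, LinearMap.smul_apply, hbr1,
          map_finsuppSum, LinearMap.finsupp_sum_apply]
        congr 1
        · norm_num
        · apply Finset.sum_eq_zero
          intro k hk
          have hk1 : (1:ℕ+) < k := by
            rcases eq_or_lt_of_le k.one_le with h | h
            · exact absurd (h ▸ hδ) (Finsupp.mem_support_iff.mp hk)
            · exact h
          show (br ((δ k) • B (k + 1 - 1))) (B n) = 0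
          rw [map_smul, LinearMap.smul_apply, hcanc, hbr2 k n hk1,
            smul_zero]
      have h2 : br (B 1) ((((n:ℕ):F) * γ₁) • B n + δ.sum fun k c => c • B (k + n - 1))
          = (((n:ℕ):F) * γ₁) • B (n+1) + δ.sum fun k c => c • B (k + (n+1) - 1) := by
        rw [map_add, map_smul, hbr1, map_finsuppSum]
        congr 1
        apply Finsupp.sum_congr
        intro k _
        rw [map_smul, hbr1, hsub]
      rw [h1, h2]
      have hc : ((((n+1 : ℕ+) : ℕ)) : F) = ((n:ℕ):F) + 1 := by
        push_cast
        ring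
      rw [hc]
      module
    · rw [hbr2 m n hm, map_zero, hfdef m, hfdef n]
      have hA : br ((((m:ℕ):F) * γ₁) • B m + δ.sum fun k c => c • B (k + m - 1)) (B n) = 0 := by
        rw [map_add, LinearMap.add_apply, map_smul, LinearMap.smul_apply, hbr2 m n hm,
          smul_zero, map_finsuppSum, LinearMap.finsupp_sum_apply, zero_add]
        apply Finset.sum_eq_zero
        intro k _
        show (br ((δ k) • B (k + m - 1))) (B n) = 0
        rw [map_smul, LinearMap.smul_apply, hbr2 _ n (hgt k m hm), smul_zero]
      have hB : br (B m) ((((n:ℕ):F) * γ₁) • B n + δ.sum fun k c => c • B (k + n - 1)) = 0 := by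
        rw [map_add, map_smul, hbr2 m n hm, smul_zero, map_finsuppSum, zero_add]
        apply Finset.sum_eq_zero
        intro k _
        show (br (B m)) ((δ k) • B (k + n - 1)) = 0
        rw [map_smul, hbr2 m _ hm, smul_zero]
      rw [hA, hB, add_zero]
  have main : br.compr₂ f = br.comp f + br.compl₂ f := by
    refine B.ext fun m => B.ext fun n => ?_
    simpa using key m n
  intro x y
  have := LinearMap.congr_fun (LinearMap.congr_fun main x) y
  simpa using this
end

section
/- Let L be the infinite-dimensional cyclic Leibniz algebra over a field F (basis {a_n | n ≥ 1}, [a_1,a_n] = a_{n+1}, [a_m,a_k] = 0 for m > 1). The set A = {f ∈ Der(L) | f(x) ∈ [L,L] for all x ∈ L} is an abelian Lie ideal of the derivation algebra Der(L): it is closed under addition and Lie bracket, [f,g] = 0 for all f,g ∈ A, and [h,f] ∈ A for every derivation h and every f ∈ A. -/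
/-- For the infinite dimensional cyclic Leibniz algebra with basis `{a_n | n ≥ 1}`:
the set `A` of derivations mapping `L` into `[L,L] = span {a_n | n ≥ 2}` is an
abelian Lie ideal of `Der(L)`: it is closed under addition and under the commutator
bracket, `[f,g] = 0` for `f, g ∈ A`, and `[h,f] ∈ A` for every derivation `h`
and every `f ∈ A`. -/
theorem stmt19
    (F : Type*) [Field F] (L : Type*) [AddCommGroup L] [Module F L]
    (br : L →ₗ[F] L →ₗ[F] L) (B : Module.Basis ℕ+ F L)
    (hleib : ∀ a b c : L, br a (br b c) = br (br a b) c + br b (br a c))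
    (hbr1 : ∀ n : ℕ+, br (B 1) (B n) = B (n + 1))
    (hbr2 : ∀ m k : ℕ+, 1 < m → br (B m) (B k) = 0) :
    letI Der : (L →ₗ[F] L) → Prop := fun f => ∀ x y : L, f (br x y) = br (f x) y + br x (f y)
    letI A : (L →ₗ[F] L) → Prop := fun f => Der f ∧
      ∀ x : L, f x ∈ Submodule.span F {z : L | ∃ n : ℕ+, 1 < n ∧ z = B n}
    (∀ f g : L →ₗ[F] L, A f → A g → A (f + g)) ∧
    (∀ f g : L →ₗ[F] L, A f → A g → A (f ∘ₗ g - g ∘ₗ f)) ∧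
    (∀ f g : L →ₗ[F] L, A f → A g → f ∘ₗ g - g ∘ₗ f = 0) ∧
    (∀ h f : L →ₗ[F] L, Der h → A f → A (h ∘ₗ f - f ∘ₗ h)) := by
  beta_reduce
  set J : Submodule F L := Submodule.span F {z : L | ∃ n : ℕ+, 1 < n ∧ z = B n} with hJdef
  -- basic ℕ+ facts
  have lt1 : ∀ n : ℕ+, (1:ℕ+) < n + 1 := by
    intro n; rw [← PNat.coe_lt_coe, PNat.add_coe]; simp
  have succ : ∀ n : ℕ+, 1 < n → ∃ m : ℕ+, n = m + 1 := by
    intro n hn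
    have h2 : 1 < (n:ℕ) := hn
    refine ⟨⟨(n:ℕ) - 1, by omega⟩, ?_⟩
    apply PNat.coe_injective
    erw [PNat.add_coe]
    simp [PNat.mk_coe]
    omega
  have memJ : ∀ n : ℕ+, 1 < n → B n ∈ J := fun n hn => Submodule.subset_span ⟨n, hn, rfl⟩
  -- a linear map sending the basis into J sends everything into J
  have mapJ : ∀ (φ : L →ₗ[F] L), (∀ n : ℕ+, φ (B n) ∈ J) → ∀ x, φ x ∈ J := by
    intro φ hφ x
    have h1 : (⊤ : Submodule F L) ≤ J.comap φ := by
      rw [← B.span_eq]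
      refine Submodule.span_le.2 ?_
      rintro _ ⟨n, rfl⟩
      exact hφ n
    exact h1 trivial
  set T : L →ₗ[F] L := br (B 1) with hTdef
  have TJ : ∀ x, T x ∈ J := by
    refine mapJ T fun n => ?_
    rw [hTdef, hbr1 n]
    exact memJ _ (lt1 n)
  -- elements of J act trivially on the left
  have brJ0 : ∀ z ∈ J, br z = 0 := by
    have h1 : J ≤ LinearMap.ker br := by
      refine Submodule.span_le.2 ?_
      rintro _ ⟨n, hn, rfl⟩
      have : br (B n) = 0 := B.ext fun k => hbr2 n k hn
      simpa [LinearMap.mem_ker] using this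
    intro z hz
    simpa [LinearMap.mem_ker] using h1 hz
  -- all brackets land in J
  have brJ2 : ∀ x y, br x y ∈ J := by
    intro x y
    refine mapJ (br.flip y) (fun k => ?_) x
    rcases eq_or_lt_of_le k.one_le with h | h
    · have : br.flip y (B k) = T y := by
        simp [LinearMap.flip_apply, hTdef, ← h]
      rw [this]; exact TJ y
    · have : br (B k) = 0 := brJ0 _ (memJ k h)
      simp [LinearMap.flip_apply, this]
  -- every derivation preserves J
  have derJ : ∀ h : L →ₗ[F] L, (∀ x y : L, h (br x y) = br (h x) y + br x (h y)) → ∀ z ∈ J, h z ∈ J := by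
    intro h hder z hz
    have hle : J ≤ J.comap h := by
      refine Submodule.span_le.2 ?_
      rintro _ ⟨n, hn, rfl⟩
      obtain ⟨m, rfl⟩ := succ n hn
      have : h (B (m + 1)) ∈ J := by
        rw [← hbr1 m, hder]
        exact add_mem (brJ2 _ _) (brJ2 _ _)
      exact this
    exact hle hz
  -- elements of A commute with T
  have commT : ∀ f : L →ₗ[F] L, (∀ x y : L, f (br x y) = br (f x) y + br x (f y)) → (∀ x, f x ∈ J) → ∀ x, f (T x) = T (f x) := by
    intro f hder hmem x
    have h1 := hder (B 1) x
    rw [brJ0 _ (hmem (B 1))] at h1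
    simpa [hTdef] using h1
  have commTpow : ∀ f : L →ₗ[F] L, (∀ x y : L, f (br x y) = br (f x) y + br x (f y)) → (∀ x, f x ∈ J) →
      ∀ (k : ℕ) (x : L), f ((T ^ k) x) = (T ^ k) (f x) := by
    intro f hder hmem k
    induction k with
    | zero => intro x; simp
    | succ k ih =>
      intro x
      rw [pow_succ', Module.End.mul_apply, Module.End.mul_apply, commT f hder hmem, ih]
  -- powers of T on the basis
  have powB : ∀ (k : ℕ) (m : ℕ+), (T ^ k) (B m) = B ⟨(m:ℕ) + k, by have := m.pos; omega⟩ := by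
    intro k
    induction k with
    | zero =>
      intro m
      simp only [pow_zero, Module.End.one_apply]
      congr 1
    | succ k ih =>
      intro m
      rw [pow_succ', Module.End.mul_apply, ih]
      erw [hbr1]
      congr 1
  -- values of elements of A on the basis
  have fBn : ∀ f : L →ₗ[F] L, (∀ x y : L, f (br x y) = br (f x) y + br x (f y)) → (∀ x, f x ∈ J) →
      ∀ n : ℕ+, f (B n) = (T ^ ((n:ℕ) - 1)) (f (B 1)) := by
    intro f hder hmem n
    induction n using PNat.recOn with
    | one => simp
    | succ n ih =>
      rw [← hbr1 n, commT f hder hmem, ih]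
      have h1 : ((n + 1 : ℕ+) : ℕ) - 1 = ((n:ℕ) - 1) + 1 := by
        have := n.pos; rw [PNat.add_coe]; simp; omega
      rw [h1, pow_succ', Module.End.mul_apply]
  -- the auxiliary bilinear map
  set Φ : L →ₗ[F] (L →ₗ[F] L) := B.constr F (fun n => T ^ ((n:ℕ) - 1)) with hΦdef
  have Φsymm : ∀ x y, Φ x y = Φ y x := by
    have h1 : Φ = Φ.flip := by
      refine B.ext fun n => B.ext fun m => ?_
      rw [LinearMap.flip_apply, hΦdef, B.constr_basis, B.constr_basis, powB, powB]
      congr 1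
      apply PNat.coe_injective
      have hn := n.pos; have hm := m.pos
      simp
      omega
    intro x y
    conv_lhs => rw [h1]
    rw [LinearMap.flip_apply]
  have fz : ∀ f : L →ₗ[F] L, (∀ x y : L, f (br x y) = br (f x) y + br x (f y)) → (∀ x, f x ∈ J) →
      ∀ z ∈ J, f z = Φ z (f (B 1)) := by
    intro f hder hmem z hz
    induction hz using Submodule.span_induction with
    | mem z hzS =>
      obtain ⟨n, hn, rfl⟩ := hzS
      rw [fBn f hder hmem, hΦdef, B.constr_basis]
    | zero => simp
    | add a b _ _ iha ihb => simp [iha, ihb]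
    | smul c a _ iha => simp [iha]
  -- commutation of elements of A
  have keycomm : ∀ f g : L →ₗ[F] L, ((∀ x y : L, f (br x y) = br (f x) y + br x (f y)) ∧ ∀ x, f x ∈ J) → ((∀ x y : L, g (br x y) = br (g x) y + br x (g y)) ∧ ∀ x, g x ∈ J) →
      f ∘ₗ g = g ∘ₗ f := by
    intro f g hf hg
    have h1 : f (g (B 1)) = g (f (B 1)) := by
      rw [fz f hf.1 hf.2 _ (hg.2 (B 1)), fz g hg.1 hg.2 _ (hf.2 (B 1)), Φsymm]
    refine B.ext fun n => ?_
    simp only [LinearMap.comp_apply]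
    rw [fBn g hg.1 hg.2 n, fBn f hf.1 hf.2 n, commTpow f hf.1 hf.2, commTpow g hg.1 hg.2, h1]
  refine ⟨?_, ?_, ?_, ?_⟩
  · -- closed under addition
    intro f g hf hg
    refine ⟨fun x y => ?_, fun x => ?_⟩
    · simp only [LinearMap.add_apply, hf.1 x y, hg.1 x y, map_add]
      abel
    · exact add_mem (hf.2 x) (hg.2 x)
  · -- closed under bracket (the bracket is 0)
    intro f g hf hg
    have h0 : f ∘ₗ g - g ∘ₗ f = 0 := by rw [keycomm f g hf hg, sub_self]
    rw [h0]
    exact ⟨fun x y => by simp, fun x => by simp⟩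
  · -- bracket vanishes
    intro f g hf hg
    rw [keycomm f g hf hg, sub_self]
  · -- ideal property
    intro h f hh hf
    refine ⟨fun x y => ?_, fun x => ?_⟩
    · simp only [LinearMap.sub_apply, LinearMap.comp_apply]
      rw [hf.1 x y, map_add, hh (f x) y, hh x (f y), hh x y, map_add,
        hf.1 (h x) y, hf.1 x (h y)]
      simp only [map_sub, LinearMap.sub_apply, map_add, LinearMap.add_apply]
      abel
    · simp only [LinearMap.sub_apply, LinearMap.comp_apply]
      exact sub_mem (derJ h hh _ (hf.2 x)) (hf.2 (h x))
end
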